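/- Let Z be a metric space, g* ∈ Z, P ⊆ Z a closed subset with g* ∈ P, and let R be an equivalence relation on Z satisfying: (i) uniqueness at g*: every h ∈ P with R(h, g*) equals g*; (ii) local uniqueness: there exists δ > 0 such that any g, h ∈ P with dist(g, g*) < δ, dist(h, g*) < δ and R(g, h) satisfy g = h; (iii) compactness: for every sequence (g_n) in P converging to g* and every sequence (h_n) in P with R(h_n, g_n) for all n, the sequence (h_n) admits a convergent subsequence in Z; (iv) closedness of R: if g_n → g, h_n → h and R(g_n, h_n) for all n, then R(g, h). Then there exists ε > 0 such that for every g ∈ P with dist(g, g*) < ε and every h ∈ P with R(g, h), one has h = g; i.e., near g*, each equivalence class contains at most one element of P. -/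
import Mathlib


open Filter Topology

/-- Abstract global uniqueness: let `Z` be a metric space, `P ⊆ Z` closed, `g* ∈ P`, and `R`
an equivalence relation on `Z` such that: (i) `g*` is the unique element of `P` in its
`R`-class; (ii) locally near `g*`, `R`-related elements of `P` coincide; (iii) sequences
`h n ∈ P` that are `R`-related to sequences `g n ∈ P` converging to `g*` have convergent
subsequences; (iv) `R` is closed under limits. Then every element of `P` sufficiently close
to `g*` is the unique element of `P` in its `R`-class. -/
theorem global_uniqueness_near_nondegenerate_unique_solution
    {Z : Type*} [MetricSpace Z] (P : Set Z) (hP : IsClosed P)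
    (gs : Z) (hgs : gs ∈ P) (R : Z → Z → Prop) (hR : Equivalence R)
    (huniq : ∀ h ∈ P, R h gs → h = gs)
    (hloc : ∃ δ > (0 : ℝ), ∀ g ∈ P, ∀ h ∈ P,
      dist g gs < δ → dist h gs < δ → R g h → g = h)
    (hcpt : ∀ g h : ℕ → Z, (∀ n, g n ∈ P) → Tendsto g atTop (𝓝 gs) →
      (∀ n, h n ∈ P) → (∀ n, R (h n) (g n)) →
      ∃ (z : Z) (φ : ℕ → ℕ), StrictMono φ ∧ Tendsto (h ∘ φ) atTop (𝓝 z))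
    (hclosed : ∀ (g h : ℕ → Z) (g₀ h₀ : Z), Tendsto g atTop (𝓝 g₀) →
      Tendsto h atTop (𝓝 h₀) → (∀ n, R (g n) (h n)) → R g₀ h₀) :
    ∃ ε > (0 : ℝ), ∀ g ∈ P, dist g gs < ε → ∀ h ∈ P, R g h → h = g := by
  by_contra hcon
  push_neg at hcon
  -- extract sequences g n, h n with dist (g n) gs < 1/(n+1), R (g n) (h n), h n ≠ g n
  have hseq : ∀ n : ℕ, ∃ g ∈ P, dist g gs < 1 / (n + 1) ∧
      ∃ h ∈ P, R g h ∧ h ≠ g := by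
    intro n
    obtain ⟨g, hgP, hgd, h, hhP, hRgh, hne⟩ := hcon (1 / (n + 1)) (by positivity)
    exact ⟨g, hgP, hgd, h, hhP, hRgh, hne⟩
  choose g hgP hgd h hhP hRgh hne using hseq
  have hgtend : Tendsto g atTop (𝓝 gs) := by
    rw [tendsto_iff_dist_tendsto_zero]
    refine squeeze_zero (fun n => dist_nonneg) (fun n => le_of_lt (hgd n)) ?_
    exact tendsto_one_div_add_atTop_nhds_zero_nat
  obtain ⟨z, φ, hφ, hhz⟩ := hcpt g h hgP hgtend hhP (fun n => hR.symm (hRgh n))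
  have hgφ : Tendsto (g ∘ φ) atTop (𝓝 gs) := hgtend.comp hφ.tendsto_atTop
  have hzP : z ∈ P := hP.mem_of_tendsto hhz (Eventually.of_forall fun n => hhP (φ n))
  have hRz : R z gs := hclosed (h ∘ φ) (g ∘ φ) z gs hhz hgφ fun n => hR.symm (hRgh (φ n))
  have hz : z = gs := huniq z hzP hRz
  rw [hz] at hhz
  obtain ⟨δ, hδ, hlocδ⟩ := hloc
  have h1 : ∀ᶠ n in atTop, dist ((g ∘ φ) n) gs < δ :=
    (tendsto_iff_dist_tendsto_zero.mp hgφ).eventually_lt_const hδ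
  have h2 : ∀ᶠ n in atTop, dist ((h ∘ φ) n) gs < δ :=
    (tendsto_iff_dist_tendsto_zero.mp hhz).eventually_lt_const hδ
  obtain ⟨n, hn1, hn2⟩ := (h1.and h2).exists
  exact hne (φ n) (hlocδ _ (hgP (φ n)) _ (hhP (φ n)) hn1 hn2 (hRgh (φ n))).symm
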